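/- Let $P = (P_{ij})_{1 \leq i,j \leq 4}$ be a self-dual $\mathfrak{so}(m)$-valued 2-form, i.e. each $P_{ij}$ is a real skew-symmetric $m \times m$ matrix, $P_{ij} = -P_{ji}$, and $P_{12} = P_{34}$, $P_{13} = P_{42}$, $P_{14} = P_{23}$. Define $[P,P]_{ij} = 2\sum_{k=1}^4 [P_{ik}, P_{jk}]$, the inner product $\langle P, Q \rangle = \sum_{i,j=1}^4 \big( -\tfrac{1}{2} \operatorname{tr}(P_{ij} Q_{ij}) \big)$, and $|P| = \langle P, P\rangle^{1/2}$. Then $\langle P, [P,P] \rangle \leq \tfrac{4}{\sqrt{6}} \, |P|^3$. -/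

import Mathlib

open Matrix

namespace SDHelper

variable {n : Type*} [Fintype n] [DecidableEq n]

/-- Squared Frobenius norm as entry sum. -/
noncomputable def frob2 (X : Matrix n n ℝ) : ℝ := ∑ j, ∑ k, (X j k) ^ 2

lemma frob2_nonneg (X : Matrix n n ℝ) : 0 ≤ frob2 X := by
  apply Finset.sum_nonneg; intro j _; apply Finset.sum_nonneg; intro k _; positivity

noncomputable def S2 (X : Matrix n n ℂ) : ℝ := ∑ j, ∑ k, Complex.normSq (X j k)

lemma trace_conjTranspose_mul (X : Matrix n n ℂ) :
    Matrix.trace (Xᴴ * X) = (S2 X : ℂ) := by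
  simp only [Matrix.trace, Matrix.diag, Matrix.mul_apply, Matrix.conjTranspose_apply, S2]
  push_cast
  rw [Finset.sum_comm]
  congr 1; ext j; congr 1; ext k
  exact Complex.normSq_eq_conj_mul_self.symm

lemma S2_unitary_conj (U X : Matrix n n ℂ) (hU2 : U * star U = 1) :
    S2 (star U * X * U) = S2 X := by
  have h : ((star U * X * U)ᴴ * (star U * X * U)) = star U * (Xᴴ * X) * U := by
    have hsU : star U = Uᴴ := rfl
    calc (star U * X * U)ᴴ * (star U * X * U)
        = Uᴴ * Xᴴ * (U * Uᴴ) * X * U := by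
          simp only [conjTranspose_mul, conjTranspose_conjTranspose, hsU]
          noncomm_ring
      _ = star U * (Xᴴ * X) * U := by rw [← hsU, hU2]; noncomm_ring
  have := congrArg Matrix.trace h
  rw [trace_conjTranspose_mul] at this
  have h2 : Matrix.trace (star U * (Xᴴ * X) * U) = Matrix.trace (Xᴴ * X) := by
    rw [Matrix.trace_mul_cycle, ← Matrix.mul_assoc, hU2, Matrix.one_mul]
  rw [h2, trace_conjTranspose_mul] at this
  exact_mod_cast this

end SDHelper

namespace SDHelper

variable {n : Type*} [Fintype n] [DecidableEq n]

omit [DecidableEq n] in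
lemma two_le (f : n → ℝ) {p q : n} (h : p ≠ q) : f p ^ 2 + f q ^ 2 ≤ ∑ i, f i ^ 2 := by
  classical
  have hs : ({p, q} : Finset n).sum (fun i => f i ^ 2) = f p ^ 2 + f q ^ 2 := by
    rw [Finset.sum_insert (by simp [h]), Finset.sum_singleton]
  rw [← hs]
  exact Finset.sum_le_sum_of_subset_of_nonneg (Finset.subset_univ _) (fun i _ _ => sq_nonneg _)

omit [DecidableEq n] in
lemma four_le (f : n → ℝ) {p q r s : n} (hpq : p ≠ q) (hpr : p ≠ r) (hps : p ≠ s)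
    (hqr : q ≠ r) (hqs : q ≠ s) (hrs : r ≠ s) :
    f p ^ 2 + f q ^ 2 + f r ^ 2 + f s ^ 2 ≤ ∑ i, f i ^ 2 := by
  classical
  have hs : ({p, q, r, s} : Finset n).sum (fun i => f i ^ 2)
      = f p ^ 2 + (f q ^ 2 + (f r ^ 2 + f s ^ 2)) := by
    rw [Finset.sum_insert (by simp [hpq, hpr, hps]), Finset.sum_insert (by simp [hqr, hqs]),
        Finset.sum_insert (by simp [hrs]), Finset.sum_singleton]
  have := Finset.sum_le_sum_of_subset_of_nonneg (s := ({p, q, r, s} : Finset n))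
    (Finset.subset_univ _) (fun i _ _ => sq_nonneg (f i))
  rw [hs] at this
  linarith

omit [DecidableEq n] in
lemma sq_sub_le_sum (lam : n → ℝ) (j k : n)
    (fact1 : ∀ i, ∃ l, lam l = -lam i)
    (fact2 : ∀ i1 i2, i1 ≠ i2 → lam i1 = lam i2 →
       ∃ l1 l2, l1 ≠ l2 ∧ lam l1 = -lam i1 ∧ lam l2 = -lam i1)
    (hnu : lam k = -lam j → ∃ i, lam i = lam j ∧ i ≠ j) :
    (lam j - lam k) ^ 2 ≤ ∑ i, lam i ^ 2 := by
  rcases eq_or_ne (lam j) (lam k) with h | hjk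
  · rw [h]
    simp only [sub_self, ne_eq, OfNat.ofNat_ne_zero, not_false_eq_true, zero_pow]
    exact Finset.sum_nonneg fun i _ => sq_nonneg _
  rcases eq_or_ne (lam k) (-lam j) with hk | hk
  · have hj0 : lam j ≠ 0 := by
      intro h0; apply hjk; rw [hk, h0, neg_zero]
    obtain ⟨j2, hj2, hj2ne⟩ := hnu hk
    obtain ⟨l1, l2, hl12, hl1, hl2⟩ := fact2 j j2 (Ne.symm hj2ne) hj2.symm
    have d1 : j ≠ j2 := Ne.symm hj2ne
    have d2 : j ≠ l1 := fun h => hj0 (by have := hl1; rw [← h] at this; linarith)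
    have d3 : j ≠ l2 := fun h => hj0 (by have := hl2; rw [← h] at this; linarith)
    have d4 : j2 ≠ l1 := fun h => hj0 (by rw [← h, hj2] at hl1; linarith)
    have d5 : j2 ≠ l2 := fun h => hj0 (by rw [← h, hj2] at hl2; linarith)
    have key := four_le lam d1 d2 d3 d4 d5 hl12
    have e0 : (lam j - lam k) ^ 2 = 4 * lam j ^ 2 := by rw [hk]; ring
    have e1 : lam j2 ^ 2 = lam j ^ 2 := by rw [hj2]
    have e2 : lam l1 ^ 2 = lam j ^ 2 := by rw [hl1]; ring
    have e3 : lam l2 ^ 2 = lam j ^ 2 := by rw [hl2]; ring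
    linarith [key]
  · obtain ⟨j', hj'⟩ := fact1 j
    obtain ⟨k', hk'⟩ := fact1 k
    by_cases hj0 : lam j = 0
    · have hk0 : lam k ≠ 0 := by intro h; apply hk; rw [h, hj0, neg_zero]
      have dkk : k ≠ k' := fun h => hk0 (by rw [← h] at hk'; linarith)
      have key := two_le lam dkk
      have e0 : (lam j - lam k) ^ 2 = lam k ^ 2 := by rw [hj0]; ring
      have e1 : lam k' ^ 2 = lam k ^ 2 := by rw [hk']; ring
      linarith [key, sq_nonneg (lam k)]
    by_cases hk0 : lam k = 0
    · have djj : j ≠ j' := fun h => hj0 (by rw [← h] at hj'; linarith)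
      have key := two_le lam djj
      have e0 : (lam j - lam k) ^ 2 = lam j ^ 2 := by rw [hk0]; ring
      have e1 : lam j' ^ 2 = lam j ^ 2 := by rw [hj']; ring
      linarith [key, sq_nonneg (lam j)]
    · have d1 : j ≠ k := fun h => hjk (by rw [h])
      have d2 : j ≠ j' := fun h => hj0 (by rw [← h] at hj'; linarith)
      have d3 : j ≠ k' := fun h => hk (by rw [← h] at hk'; linarith)
      have d4 : k ≠ j' := fun h => hk (by rw [← h] at hj'; linarith)
      have d5 : k ≠ k' := fun h => hk0 (by rw [← h] at hk'; linarith)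
      have d6 : j' ≠ k' := fun h => hjk (by rw [h] at hj'; rw [hj'] at hk'; linarith)
      have key := four_le lam d1 d2 d3 d4 d5 d6
      have e1 : lam j' ^ 2 = lam j ^ 2 := by rw [hj']; ring
      have e2 : lam k' ^ 2 = lam k ^ 2 := by rw [hk']; ring
      nlinarith [key, e1, e2, sq_nonneg (lam j + lam k)]

end SDHelper

namespace SDHelper

variable {n : Type*} [Fintype n] [DecidableEq n]


lemma S2_map (X : Matrix n n ℝ) : S2 (X.map (⇑(Complex.ofRealHom))) = frob2 X := by
  simp [S2, frob2, Matrix.map_apply, Complex.ofRealHom_eq_coe, Complex.normSq_ofReal, sq]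

lemma comm_frob2_le (B C : Matrix n n ℝ) (hB : Bᵀ = -B) (hC : Cᵀ = -C) :
    frob2 (B * C - C * B) ≤ frob2 B * frob2 C := by
  classical
  have hBe : ∀ i j, B j i = -(B i j) := by
    intro i j; have := congrFun (congrFun hB i) j
    simpa [Matrix.transpose_apply, Matrix.neg_apply] using this
  have hCe : ∀ i j, C j i = -(C i j) := by
    intro i j; have := congrFun (congrFun hC i) j
    simpa [Matrix.transpose_apply, Matrix.neg_apply] using this
  set f : ℝ →+* ℂ := Complex.ofRealHom with hf
  set Bc : Matrix n n ℂ := B.map f with hBcdef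
  set Cc : Matrix n n ℂ := C.map f with hCcdef
  set H : Matrix n n ℂ := Complex.I • Bc with hHdef
  have hH : H.IsHermitian := by
    ext j k
    simp only [hHdef, Matrix.conjTranspose_apply, Matrix.smul_apply, Matrix.map_apply,
      smul_eq_mul, star_mul', Complex.star_def, Complex.conj_I, hBcdef]
    rw [hBe j k]
    simp [hf, Complex.ofRealHom_eq_coe, Complex.conj_ofReal]
  set U : Matrix n n ℂ := (hH.eigenvectorUnitary : Matrix n n ℂ) with hUdef
  set lam : n → ℝ := hH.eigenvalues with hlamdef
  set D : Matrix n n ℂ := Matrix.diagonal (fun i => (lam i : ℂ)) with hDdef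
  have hU1 : star U * U = 1 := (Matrix.mem_unitaryGroup_iff').mp hH.eigenvectorUnitary.2
  have hU2 : U * star U = 1 := (Matrix.mem_unitaryGroup_iff).mp hH.eigenvectorUnitary.2
  have hspec : H = U * D * star U := hH.spectral_theorem
  have hUHU : star U * H * U = D := by
    rw [hspec]
    calc star U * (U * D * star U) * U = (star U * U) * D * (star U * U) := by
          simp only [Matrix.mul_assoc]
      _ = D := by rw [hU1, Matrix.one_mul, Matrix.mul_one]
  have hHU : H * U = U * D := by
    rw [hspec, Matrix.mul_assoc, hU1, Matrix.mul_one]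
  have hUH : star U * H = D * star U := by
    rw [hspec, ← Matrix.mul_assoc, ← Matrix.mul_assoc, hU1, Matrix.one_mul]
  set cj : ℂ →+* ℂ := starRingEnd ℂ with hcj
  set Ubar : Matrix n n ℂ := U.map cj with hUbardef
  have hconjH : H.map cj = -H := by
    ext j k
    simp [hHdef, Matrix.map_apply, Matrix.smul_apply, smul_eq_mul, _root_.map_mul,
      Complex.conj_I, Complex.conj_ofReal, hBcdef, hcj, hf, Complex.ofRealHom_eq_coe]
  have hconjD : D.map cj = D := by
    ext j k
    by_cases h : j = k
    · subst h; simp [hDdef, Matrix.map_apply, Matrix.diagonal_apply_eq, Complex.conj_ofReal, hcj]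
    · simp [hDdef, Matrix.map_apply, Matrix.diagonal_apply_ne _ h, hcj]
  have hHUbar : H * Ubar = -(Ubar * D) := by
    have h1 := congrArg (fun X => X.map cj) hHU
    simp only [_root_.Matrix.map_mul] at h1
    rw [hconjH, hconjD] at h1
    rw [← h1]
    simp [Matrix.neg_mul, hUbardef]
  set W : Matrix n n ℂ := star U * Ubar with hWdef
  have hDW : D * W = -(W * D) := by
    calc D * W = (D * star U) * Ubar := by rw [hWdef, Matrix.mul_assoc]
      _ = (star U * H) * Ubar := by rw [hUH]
      _ = star U * (H * Ubar) := by rw [Matrix.mul_assoc]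
      _ = star U * (-(Ubar * D)) := by rw [hHUbar]
      _ = -(W * D) := by rw [hWdef]; simp [Matrix.mul_neg, Matrix.mul_assoc]
  have hWlam : ∀ j k, W j k ≠ 0 → lam j = -lam k := by
    intro j k hw
    have h1 := congrFun (congrFun hDW j) k
    simp only [hDdef, Matrix.diagonal_mul, Matrix.mul_diagonal, Matrix.neg_apply] at h1
    have h2 : ((lam j : ℂ) + (lam k : ℂ)) * W j k = 0 := by linear_combination h1
    rcases mul_eq_zero.mp h2 with h3 | h3
    · have : (((lam j + lam k : ℝ)) : ℂ) = 0 := by push_cast; linear_combination h3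
      have := Complex.ofReal_eq_zero.mp this
      linarith
    · exact absurd h3 hw
  have hUbarUt : Ubar * Uᵀ = 1 := by
    have h1 : Ubar * Uᵀ = (U * star U).map cj := by
      ext j k
      simp [Matrix.mul_apply, Matrix.map_apply, Matrix.transpose_apply, hUbardef,
        Matrix.conjTranspose_apply, map_sum, hcj]
    rw [h1, hU2]
    exact Matrix.map_one _ (map_zero cj) (map_one cj)
  have hstarUbar : star Ubar = Uᵀ := by
    ext j k
    simp [hUbardef, Matrix.conjTranspose_apply, Matrix.map_apply, Matrix.transpose_apply, hcj]
  have hWW : W * star W = 1 := by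
    have hsW : star W = Uᵀ * U := by
      rw [hWdef, Matrix.star_mul, hstarUbar, star_star]
    rw [hsW, hWdef]
    calc star U * Ubar * (Uᵀ * U) = star U * ((Ubar * Uᵀ) * U) := by
          simp only [Matrix.mul_assoc]
      _ = 1 := by rw [hUbarUt, Matrix.one_mul, hU1]
  have hWentry : ∀ i i', ∑ l, W i l * star (W i' l) = (1 : Matrix n n ℂ) i i' := by
    intro i i'
    have := congrFun (congrFun hWW i) i'
    simpa [Matrix.mul_apply, Matrix.star_apply, Matrix.conjTranspose_apply] using this
  have fact1 : ∀ i, ∃ l, lam l = -lam i := by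
    intro i
    by_contra hno
    push_neg at hno
    have h0 : ∀ l, W i l = 0 := by
      intro l
      by_contra hw
      exact hno l (by have := hWlam i l hw; linarith)
    have h1 := hWentry i i
    rw [Finset.sum_eq_zero (fun l _ => by rw [h0 l]; ring)] at h1
    simp [Matrix.one_apply_eq] at h1
  have fact2 : ∀ i1 i2, i1 ≠ i2 → lam i1 = lam i2 →
      ∃ l1 l2, l1 ≠ l2 ∧ lam l1 = -lam i1 ∧ lam l2 = -lam i1 := by
    intro i1 i2 hne heq
    by_contra hno
    push_neg at hno
    obtain ⟨l0, hl0⟩ := fact1 i1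
    have huniq : ∀ l, lam l = -lam i1 → l = l0 := by
      intro l hl
      by_contra hll
      exact (hno l l0 hll hl) hl0
    have hsupp : ∀ i, lam i = lam i1 → ∀ l, l ≠ l0 → W i l = 0 := by
      intro i hi l hl
      by_contra hw
      have h1 := hWlam i l hw
      have h2 : lam l = -lam i1 := by rw [hi] at h1; linarith
      exact hl (huniq l h2)
    have red : ∀ i i', lam i = lam i1 → lam i' = lam i1 →
        ∑ l, W i l * star (W i' l) = W i l0 * star (W i' l0) := by
      intro i i' hi hi'
      apply Finset.sum_eq_single l0
      · intro l _ hl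
        rw [hsupp i hi l hl]; ring
      · intro h; exact absurd (Finset.mem_univ l0) h
    have e11 : W i1 l0 * star (W i1 l0) = 1 := by
      have := hWentry i1 i1; rw [red i1 i1 rfl rfl] at this; simpa using this
    have e22 : W i2 l0 * star (W i2 l0) = 1 := by
      have := hWentry i2 i2; rw [red i2 i2 heq.symm heq.symm] at this; simpa using this
    have e12 : W i1 l0 * star (W i2 l0) = 0 := by
      have := hWentry i1 i2; rw [red i1 i2 rfl heq.symm] at this
      simpa [Matrix.one_apply_ne hne] using this
    rcases mul_eq_zero.mp e12 with h | h
    · rw [h, zero_mul] at e11; exact zero_ne_one e11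
    · rw [h, mul_zero] at e22; exact zero_ne_one e22
  set C' : Matrix n n ℂ := star U * Cc * U with hC'def
  set N : Matrix n n ℂ := star U * Cc * Ubar with hNdef
  have hCct : Ccᵀ = -Cc := by
    ext j k
    simp [hCcdef, Matrix.transpose_apply, Matrix.map_apply, Matrix.neg_apply, hCe j k]
  have hNskew : Nᵀ = -N := by
    have hUbart : Ubarᵀ = star U := by
      ext j k; simp [hUbardef, Matrix.transpose_apply, Matrix.map_apply,
        Matrix.conjTranspose_apply, hcj]
    have hstarUt : (star U)ᵀ = Ubar := by
      ext j k; simp [hUbardef, Matrix.transpose_apply, Matrix.map_apply,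
        Matrix.conjTranspose_apply, hcj]
    rw [hNdef, Matrix.transpose_mul, Matrix.transpose_mul, hUbart, hstarUt, hCct]
    simp [Matrix.mul_neg, Matrix.neg_mul, Matrix.mul_assoc]
  have hNdiag : ∀ j, N j j = 0 := by
    intro j
    have := congrFun (congrFun hNskew j) j
    simp only [Matrix.transpose_apply, Matrix.neg_apply] at this
    have h3 : (2 : ℂ) * N j j = 0 := by linear_combination this
    simpa using (mul_eq_zero.mp h3).resolve_left (by norm_num)
  have hC'N : C' = N * star W := by
    have hsW : star W = Uᵀ * U := by
      rw [hWdef, Matrix.star_mul, hstarUbar, star_star]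
    calc C' = star U * Cc * (1 : Matrix n n ℂ) * U := by rw [Matrix.mul_one, hC'def]
      _ = star U * Cc * (Ubar * Uᵀ) * U := by rw [hUbarUt]
      _ = N * (Uᵀ * U) := by simp only [hNdef, Matrix.mul_assoc]
      _ = N * star W := by rw [hsW]
  have hC'zero : ∀ j k, lam k = -lam j → (∀ i, lam i = lam j → i = j) → C' j k = 0 := by
    intro j k hk huniq
    have h1 : C' j k = ∑ l, N j l * star (W k l) := by
      rw [hC'N]
      simp [Matrix.mul_apply, Matrix.star_apply, Matrix.conjTranspose_apply]
    rw [h1]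
    apply Finset.sum_eq_zero
    intro l _
    by_cases hw : W k l = 0
    · simp [hw]
    · have hlam := hWlam k l hw
      have h2 : lam l = lam j := by rw [hk] at hlam; linarith
      rw [huniq l h2, hNdiag j, zero_mul]
  have hS2C' : S2 C' = frob2 C := by
    rw [hC'def, S2_unitary_conj U Cc hU2, hCcdef, hf, S2_map]
  have hD2 : S2 D = ∑ i, lam i ^ 2 := by
    simp only [S2, hDdef, Matrix.diagonal_apply]
    apply Finset.sum_congr rfl
    intro j _
    rw [Finset.sum_eq_single j]
    · simp [Complex.normSq_ofReal, sq]
    · intro k _ hk; simp [Ne.symm hk]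
    · intro h; exact absurd (Finset.mem_univ j) h
  have hSD : S2 D = frob2 B := by
    have h1 : S2 (star U * H * U) = S2 H := S2_unitary_conj U H hU2
    rw [hUHU] at h1
    have h2 : S2 H = frob2 B := by
      simp [S2, frob2, hHdef, Matrix.smul_apply, smul_eq_mul, Complex.normSq_mul,
        Complex.normSq_I, Matrix.map_apply, hBcdef, hf, Complex.ofRealHom_eq_coe,
        Complex.normSq_ofReal, sq]
    rw [h1, h2]
  have hlam2 : ∑ i, lam i ^ 2 = frob2 B := by rw [← hD2, hSD]
  have hKc : (B * C - C * B).map ⇑f = Bc * Cc - Cc * Bc := by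
    ext j k
    simp [Matrix.map_apply, Matrix.sub_apply, Matrix.mul_apply, map_sub, map_sum,
      _root_.map_mul, hBcdef, hCcdef]
  have hBcU : star U * Bc * U = (-Complex.I) • D := by
    have hBcH : Bc = (-Complex.I) • H := by
      rw [hHdef, smul_smul]
      simp
    rw [hBcH, Matrix.mul_smul, Matrix.smul_mul, hUHU]
  have e1 : star U * (Bc * Cc) * U = (star U * Bc * U) * (star U * Cc * U) := by
    calc star U * (Bc * Cc) * U
        = (star U * Bc) * (1 : Matrix n n ℂ) * (Cc * U) := by
          simp only [Matrix.mul_one, Matrix.mul_assoc]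
      _ = (star U * Bc) * (U * star U) * (Cc * U) := by rw [hU2]
      _ = (star U * Bc * U) * (star U * Cc * U) := by simp only [Matrix.mul_assoc]
  have e2 : star U * (Cc * Bc) * U = (star U * Cc * U) * (star U * Bc * U) := by
    calc star U * (Cc * Bc) * U
        = (star U * Cc) * (1 : Matrix n n ℂ) * (Bc * U) := by
          simp only [Matrix.mul_one, Matrix.mul_assoc]
      _ = (star U * Cc) * (U * star U) * (Bc * U) := by rw [hU2]
      _ = (star U * Cc * U) * (star U * Bc * U) := by simp only [Matrix.mul_assoc]
  have hmid : star U * ((B * C - C * B).map ⇑f) * U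
      = (-Complex.I) • (D * C' - C' * D) := by
    rw [hKc, Matrix.mul_sub, Matrix.sub_mul, e1, e2, hBcU, hC'def]
    simp [Matrix.smul_mul, Matrix.mul_smul, smul_sub]
  calc frob2 (B * C - C * B)
      = S2 ((B * C - C * B).map ⇑f) := by rw [hf, S2_map]
    _ = S2 (star U * ((B * C - C * B).map ⇑f) * U) := (S2_unitary_conj U _ hU2).symm
    _ = ∑ j, ∑ k, (lam j - lam k) ^ 2 * Complex.normSq (C' j k) := by
        rw [hmid]
        simp only [S2]
        apply Finset.sum_congr rfl; intro j _
        apply Finset.sum_congr rfl; intro k _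
        have e : ((-Complex.I) • (D * C' - C' * D)) j k
            = ((lam j - lam k : ℝ) : ℂ) * (-Complex.I) * C' j k := by
          simp only [Matrix.smul_apply, Matrix.sub_apply, hDdef, Matrix.diagonal_mul,
            Matrix.mul_diagonal, smul_eq_mul]
          push_cast; ring
        rw [e, Complex.normSq_mul, Complex.normSq_mul, Complex.normSq_ofReal, Complex.normSq_neg,
          Complex.normSq_I]
        ring
    _ ≤ ∑ j, ∑ k, (∑ i, lam i ^ 2) * Complex.normSq (C' j k) := by
        apply Finset.sum_le_sum; intro j _
        apply Finset.sum_le_sum; intro k _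
        by_cases hc : C' j k = 0
        · simp [hc]
        · apply mul_le_mul_of_nonneg_right _ (Complex.normSq_nonneg _)
          apply sq_sub_le_sum lam j k fact1 fact2
          intro hjk
          by_contra hno
          push_neg at hno
          exact hc (hC'zero j k hjk hno)
    _ = (∑ i, lam i ^ 2) * S2 C' := by
        simp only [S2, Finset.mul_sum]
    _ = frob2 B * frob2 C := by rw [hlam2, hS2C']


end SDHelper

namespace SDHelper

variable {n : Type*} [Fintype n] [DecidableEq n]

omit [DecidableEq n] in
lemma trace_transpose_mul_self (X : Matrix n n ℝ) : Matrix.trace (Xᵀ * X) = frob2 X := by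
  rw [frob2, Finset.sum_comm]
  simp [Matrix.trace, Matrix.diag, Matrix.mul_apply, Matrix.transpose_apply, sq]

lemma trace_transpose_mul_le (X Y : Matrix n n ℝ) :
    Matrix.trace (Xᵀ * Y) ≤ Real.sqrt (frob2 X) * Real.sqrt (frob2 Y) := by
  have h1 : Matrix.trace (Xᵀ * Y) = ∑ p : n × n, X p.2 p.1 * Y p.2 p.1 := by
    rw [Fintype.sum_prod_type]
    simp [Matrix.trace, Matrix.diag, Matrix.mul_apply, Matrix.transpose_apply]
  have h3 : (∑ p : n × n, X p.2 p.1 ^ 2) = frob2 X := by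
    rw [Fintype.sum_prod_type, Finset.sum_comm, frob2]
  have h4 : (∑ p : n × n, Y p.2 p.1 ^ 2) = frob2 Y := by
    rw [Fintype.sum_prod_type, Finset.sum_comm, frob2]
  have h2 := Finset.sum_mul_sq_le_sq_mul_sq Finset.univ
    (fun p : n × n => X p.2 p.1) (fun p : n × n => Y p.2 p.1)
  rw [h3, h4] at h2
  rw [h1]
  calc (∑ p : n × n, X p.2 p.1 * Y p.2 p.1)
      ≤ |∑ p : n × n, X p.2 p.1 * Y p.2 p.1| := le_abs_self _
    _ = Real.sqrt ((∑ p : n × n, X p.2 p.1 * Y p.2 p.1) ^ 2) := (Real.sqrt_sq_eq_abs _).symm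
    _ ≤ Real.sqrt (frob2 X * frob2 Y) := Real.sqrt_le_sqrt h2
    _ = Real.sqrt (frob2 X) * Real.sqrt (frob2 Y) := Real.sqrt_mul (frob2_nonneg X) _

lemma amgm3 {a b c s : ℝ} (ha : 0 ≤ a) (hb : 0 ≤ b) (hc : 0 ≤ c) (hs : 0 ≤ s)
    (h : a ^ 2 + b ^ 2 + c ^ 2 = 3 * s ^ 2) : a * b * c ≤ s ^ 3 := by
  have hx : 0 ≤ a ^ 2 := sq_nonneg a
  have hy : 0 ≤ b ^ 2 := sq_nonneg b
  have hz : 0 ≤ c ^ 2 := sq_nonneg c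
  have key : 27 * (a ^ 2 * b ^ 2 * c ^ 2) ≤ (a ^ 2 + b ^ 2 + c ^ 2) ^ 3 := by
    nlinarith [mul_nonneg hx (sq_nonneg (b ^ 2 - c ^ 2)), mul_nonneg hy (sq_nonneg (a ^ 2 - c ^ 2)),
      mul_nonneg hz (sq_nonneg (a ^ 2 - b ^ 2)),
      mul_nonneg (add_nonneg (add_nonneg hx hy) hz) (sq_nonneg (a ^ 2 - b ^ 2)),
      mul_nonneg (add_nonneg (add_nonneg hx hy) hz) (sq_nonneg (b ^ 2 - c ^ 2)),
      mul_nonneg (add_nonneg (add_nonneg hx hy) hz) (sq_nonneg (a ^ 2 - c ^ 2))]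
  have h' : (a ^ 2 + b ^ 2 + c ^ 2) ^ 3 = 27 * (s ^ 2) ^ 3 := by rw [h]; ring
  have h6 : (a * b * c) ^ 2 ≤ (s ^ 3) ^ 2 := by nlinarith [key, h']
  have hs3 : 0 ≤ s ^ 3 := by positivity
  exact le_of_pow_le_pow_left₀ two_ne_zero hs3 h6

end SDHelper

/-- A self-dual `𝔰𝔬(m)`-valued 2-form on `ℝ⁴` (indices here `0`-based). -/
def IsSelfDualForm {m : ℕ} (P : Fin 4 → Fin 4 → Matrix (Fin m) (Fin m) ℝ) : Prop :=
  (∀ i j, (P i j)ᵀ = -(P i j)) ∧ (∀ i j, P i j = -(P j i)) ∧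
    P 0 1 = P 2 3 ∧ P 0 2 = P 3 1 ∧ P 0 3 = P 1 2

/-- The self-bracket `[P,P]ᵢⱼ = 2 ∑ₖ [Pᵢₖ, Pⱼₖ]`. -/
def selfBracket {m : ℕ} (P : Fin 4 → Fin 4 → Matrix (Fin m) (Fin m) ℝ) :
    Fin 4 → Fin 4 → Matrix (Fin m) (Fin m) ℝ :=
  fun i j => 2 • ∑ k : Fin 4, (P i k * P j k - P j k * P i k)

/-- The inner product `⟨P, Q⟩ = ∑ᵢⱼ (-(1/2) tr (Pᵢⱼ Qᵢⱼ))` on `𝔰𝔬(m)`-valued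
2-forms. -/
noncomputable def formInner {m : ℕ}
    (P Q : Fin 4 → Fin 4 → Matrix (Fin m) (Fin m) ℝ) : ℝ :=
  ∑ i : Fin 4, ∑ j : Fin 4, (-(1 / 2) * Matrix.trace (P i j * Q i j))

open SDHelper

/-- The universal bound `γ₁ ≤ 4/√6` of the paper: for any self-dual
`𝔰𝔬(m)`-valued 2-form `P`, `⟨P, [P,P]⟩ ≤ (4/√6) |P|³`. -/
theorem formInner_selfBracket_le {m : ℕ}
    (P : Fin 4 → Fin 4 → Matrix (Fin m) (Fin m) ℝ) (hP : IsSelfDualForm P) :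
    formInner P (selfBracket P) ≤
      (4 / Real.sqrt 6) * Real.sqrt (formInner P P) ^ 3 := by
  obtain ⟨hsk, han, h1, h2, h3⟩ := hP
  set A := P 0 1 with hA
  set B := P 0 2 with hB
  set C := P 0 3 with hC
  have hd : ∀ i, P i i = 0 := by
    intro i
    have h0 : (2 : ℝ) • P i i = 0 := by
      rw [two_smul]
      nth_rewrite 1 [han i i]
      exact neg_add_cancel _
    have := smul_eq_zero.mp h0
    simpa using this
  have t10 : P 1 0 = -A := by rw [han 1 0, hA]
  have t23 : P 2 3 = A := by rw [← h1, hA]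
  have t32 : P 3 2 = -A := by rw [han 3 2, ← h1, hA]
  have t20 : P 2 0 = -B := by rw [han 2 0, hB]
  have t31 : P 3 1 = B := by rw [← h2, hB]
  have t13 : P 1 3 = -B := by rw [han 1 3, ← h2, hB]
  have t30 : P 3 0 = -C := by rw [han 3 0, hC]
  have t12 : P 1 2 = C := by rw [← h3, hC]
  have t21 : P 2 1 = -C := by rw [han 2 1, ← h3, hC]
  have hA' : Aᵀ = -A := by rw [hA]; exact hsk 0 1
  have hB' : Bᵀ = -B := by rw [hB]; exact hsk 0 2
  have hC' : Cᵀ = -C := by rw [hC]; exact hsk 0 3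
  have tr3 : ∀ X Y Z : Matrix (Fin m) (Fin m) ℝ,
      Matrix.trace (X * (Y * Z)) = Matrix.trace (Z * (X * Y)) := by
    intro X Y Z
    rw [← Matrix.mul_assoc, Matrix.trace_mul_comm]
  have key : formInner P (selfBracket P)
      = 24 * (Matrix.trace (A * (C * B)) - Matrix.trace (A * (B * C))) := by
    simp only [formInner, selfBracket, Fin.sum_univ_four, hd, t10, t23, t32, t20, t31, t13,
      t30, t12, t21, ← hA, ← hB, ← hC]
    simp only [smul_add, smul_sub, Matrix.mul_smul, Matrix.trace_smul, Matrix.mul_sub,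
      Matrix.sub_mul, Matrix.mul_add, Matrix.add_mul, Matrix.trace_sub, Matrix.trace_add,
      Matrix.mul_zero, Matrix.zero_mul, Matrix.mul_neg, Matrix.neg_mul, Matrix.trace_neg,
      Matrix.trace_zero, neg_neg, sub_zero, zero_sub, add_zero, zero_add, smul_eq_mul]
    have w3 : Matrix.trace (B * (C * A)) = Matrix.trace (A * (B * C)) := tr3 B C A
    have w5 : Matrix.trace (C * (B * A)) = Matrix.trace (A * (C * B)) := tr3 C B A
    have w4 : Matrix.trace (C * (A * B)) = Matrix.trace (A * (B * C)) := by rw [tr3 C A B, w3]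
    have w6 : Matrix.trace (B * (A * C)) = Matrix.trace (A * (C * B)) := by rw [tr3 B A C, w5]
    simp only [w3, w4, w5, w6]
    ring
  have key2 : formInner P P = 2 * (frob2 A + frob2 B + frob2 C) := by
    have trsq : ∀ X : Matrix (Fin m) (Fin m) ℝ, Xᵀ = -X →
        Matrix.trace (X * X) = -frob2 X := by
      intro X hX
      have h0 : X * X = -(Xᵀ * X) := by rw [hX, Matrix.neg_mul, neg_neg]
      rw [h0, Matrix.trace_neg, trace_transpose_mul_self]
    simp only [formInner, Fin.sum_univ_four, hd, t10, t23, t32, t20, t31, t13,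
      t30, t12, t21, ← hA, ← hB, ← hC, Matrix.mul_zero, Matrix.zero_mul, Matrix.mul_neg,
      Matrix.neg_mul, Matrix.trace_neg, Matrix.trace_zero, neg_neg]
    rw [trsq A hA', trsq B hB', trsq C hC']
    ring
  set fA := frob2 A with hfA
  set fB := frob2 B with hfB
  set fC := frob2 C with hfC
  have hfA0 : 0 ≤ fA := frob2_nonneg A
  have hfB0 : 0 ≤ fB := frob2_nonneg B
  have hfC0 : 0 ≤ fC := frob2_nonneg C
  set a := Real.sqrt fA with haa
  set b := Real.sqrt fB with hbb
  set c := Real.sqrt fC with hcc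
  have hcs : Matrix.trace (A * (C * B)) - Matrix.trace (A * (B * C)) ≤ a * (b * c) := by
    have e1 : Matrix.trace (A * (C * B)) - Matrix.trace (A * (B * C))
        = Matrix.trace (Aᵀ * (B * C - C * B)) := by
      rw [hA', Matrix.neg_mul, Matrix.trace_neg, Matrix.mul_sub, Matrix.trace_sub]
      ring
    rw [e1]
    calc Matrix.trace (Aᵀ * (B * C - C * B))
        ≤ Real.sqrt (frob2 A) * Real.sqrt (frob2 (B * C - C * B)) :=
          trace_transpose_mul_le A (B * C - C * B)
      _ ≤ a * (b * c) := by
          rw [← hfA, ← haa]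
          apply mul_le_mul_of_nonneg_left _ (Real.sqrt_nonneg _)
          calc Real.sqrt (frob2 (B * C - C * B))
              ≤ Real.sqrt (fB * fC) := Real.sqrt_le_sqrt (comm_frob2_le B C hB' hC')
            _ = b * c := by rw [Real.sqrt_mul hfB0, hbb, hcc]
  set s := Real.sqrt ((fA + fB + fC) / 3) with hss
  have hs0 : 0 ≤ s := Real.sqrt_nonneg _
  have hs2 : s ^ 2 = (fA + fB + fC) / 3 := Real.sq_sqrt (by positivity)
  have habc : a * (b * c) ≤ s ^ 3 := by
    have ha2 : a ^ 2 = fA := Real.sq_sqrt hfA0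
    have hb2 : b ^ 2 = fB := Real.sq_sqrt hfB0
    have hc2 : c ^ 2 = fC := Real.sq_sqrt hfC0
    have := amgm3 (Real.sqrt_nonneg fA) (Real.sqrt_nonneg fB) (Real.sqrt_nonneg fC) hs0
      (by rw [← haa, ← hbb, ← hcc] at *; rw [ha2, hb2, hc2, hs2]; ring)
    rw [← haa, ← hbb, ← hcc] at this
    linarith [this]
  have hrhs : (4 / Real.sqrt 6) * Real.sqrt (formInner P P) ^ 3 = 24 * s ^ 3 := by
    have h6 : (0:ℝ) ≤ 6 := by norm_num
    have hform : formInner P P = 6 * s ^ 2 := by rw [key2, hs2]; ring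
    have hsq : Real.sqrt (formInner P P) = Real.sqrt 6 * s := by
      rw [hform, Real.sqrt_mul h6, Real.sqrt_sq hs0]
    have hr6 : Real.sqrt 6 ^ 2 = 6 := Real.sq_sqrt h6
    have hr6ne : Real.sqrt 6 ≠ 0 := by positivity
    have hcube : Real.sqrt 6 ^ 3 = 6 * Real.sqrt 6 := by
      rw [pow_succ, hr6]
    rw [hsq, mul_pow, hcube]
    field_simp
    ring
  rw [key, hrhs]
  have := mul_le_mul_of_nonneg_left (le_trans hcs habc) (by norm_num : (0:ℝ) ≤ 24)
  linarith [this]
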